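/- Let μ > 0 and q ∈ (0,1]. Let N, V₁, V₂, … be mutually independent random variables, where N has the Poisson distribution with parameter μ and each Vᵢ has the geometric distribution on the positive integers with parameter q, and set S := ∑_{i=1}^{N} Vᵢ (with S := 0 on {N = 0}). Then for every real θ ≥ 0: (i) if θ ≤ μ/q then ℙ(S ≤ θ) ≤ exp(−(√μ − √(θq))²); and (ii) if θ ≥ μ/q then ℙ(S ≥ θ) ≤ exp(−(√(θq) − √μ)²). -/

import Mathlib

open MeasureTheory ProbabilityTheory Finset

lemma aux_lintegral_prod_indep {Ω ι : Type*} [MeasureSpace Ω]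
    [IsProbabilityMeasure (ℙ : Measure Ω)]
    {F : ι → Ω → ENNReal} (hmeas : ∀ i, Measurable (F i))
    (hind : iIndepFun F ℙ) (s : Finset ι) :
    ∫⁻ ω, ∏ i ∈ s, F i ω ∂ℙ = ∏ i ∈ s, ∫⁻ ω, F i ω ∂ℙ := by
  classical
  induction s using Finset.cons_induction with
  | empty => simp
  | cons i s hi ih =>
    have hindep : IndepFun (F i) (∏ j ∈ s, F j) ℙ :=
      (hind.indepFun_finsetProd_of_notMem hmeas hi).symm
    have hpm : Measurable (∏ j ∈ s, F j) := by
      have : (∏ j ∈ s, F j) = fun a => ∏ j ∈ s, F j a := by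
        ext a; simp [Finset.prod_apply]
      rw [this]; exact Finset.measurable_prod s fun j _ => hmeas j
    have key := lintegral_mul_eq_lintegral_mul_lintegral_of_indepFun''
      (μ := ℙ) (hmeas i).aemeasurable hpm.aemeasurable hindep
    simp only [Finset.prod_apply] at key
    simp only [Finset.prod_cons]
    rw [key, ih]

lemma aux_core {μpar q θ : ℝ} (hμ : 0 < μpar) (hq0 : 0 < q) (hq1 : q ≤ 1) (hθ : 0 < θ) :
    ∃ z : ℝ, 0 < z ∧ (1-q)*z < 1 ∧ ((θ*q ≤ μpar → z ≤ 1) ∧ (μpar ≤ θ*q → 1 ≤ z)) ∧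
      μpar * (q*z/(1-(1-q)*z)) - μpar
        ≤ θ * Real.log z - (Real.sqrt (θ*q) - Real.sqrt μpar)^2 := by
  have hθq : 0 < θ * q / μpar := by positivity
  set r : ℝ := Real.sqrt (θ*q/μpar) with hrdef
  have hr0 : 0 < r := Real.sqrt_pos.mpr hθq
  have hr2 : r^2 = θ*q/μpar := Real.sq_sqrt hθq.le
  have hden : 0 < q + (1-q)*r := by nlinarith
  set z : ℝ := r / (q + (1-q)*r) with hzdef
  have hz0 : 0 < z := by positivity
  have h1mz : 1 - (1-q)*z = q/(q+(1-q)*r) := by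
    rw [hzdef]; field_simp; ring
  have hpz : (1-q)*z < 1 := by
    have : (0:ℝ) < q/(q+(1-q)*r) := by positivity
    linarith [h1mz]
  have hM : q*z/(1-(1-q)*z) = r := by
    rw [h1mz, hzdef]; field_simp
    exact div_self (by nlinarith : (0:ℝ) < q + r*(1-q)).ne'
  have hzle1 : θ*q ≤ μpar → z ≤ 1 := by
    intro h
    have hrle : r ≤ 1 := by
      rw [hrdef]
      refine Real.sqrt_le_one.mpr ?_
      rw [div_le_one hμ]; linarith
    rw [hzdef, div_le_one hden]; nlinarith
  have h1lez : μpar ≤ θ*q → 1 ≤ z := by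
    intro h
    have hrge : 1 ≤ r := by
      rw [hrdef]
      refine Real.one_le_sqrt.mpr ?_
      rw [le_div_iff₀ hμ]; linarith
    rw [hzdef, le_div_iff₀ hden]; nlinarith
  refine ⟨z, hz0, hpz, ⟨hzle1, h1lez⟩, ?_⟩
  have hlog : 1 - 1/z ≤ Real.log z := by
    have := Real.log_le_sub_one_of_pos (x := z⁻¹) (by positivity)
    rw [Real.log_inv] at this
    have : -(1/z - 1) ≤ Real.log z := by rw [one_div]; linarith
    linarith
  have h1z : 1 - 1/z = q*(r-1)/r := by
    rw [hzdef]; field_simp; ring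
  have hsq : Real.sqrt (θ*q) = r * Real.sqrt μpar := by
    rw [hrdef, ← Real.sqrt_mul hθq.le]
    congr 1; field_simp
  have hμsq : Real.sqrt μpar ^ 2 = μpar := Real.sq_sqrt hμ.le
  rw [hM, hsq]
  have hkey : θ * (1 - 1/z) = μpar * r * (r - 1) := by
    rw [h1z]
    have : θ * q = μpar * r^2 := by
      field_simp at hr2; linarith [hr2]
    field_simp
    nlinarith [this]
  have hθlog : μpar * r * (r-1) ≤ θ * Real.log z := by
    rw [← hkey]; exact mul_le_mul_of_nonneg_left hlog hθ.le
  nlinarith [hθlog, hμsq]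

lemma aux_geom_tsum {q z : ℝ} (hq0 : 0 < q) (hq1 : q ≤ 1) (hz0 : 0 ≤ z) (hpz : (1-q)*z < 1) :
    ∑' k : ℕ, ENNReal.ofReal (q * z * ((1-q)*z)^k) = ENNReal.ofReal (q*z/(1-(1-q)*z)) := by
  have hp0 : 0 ≤ (1-q)*z := by nlinarith
  have h1 : ∀ k : ℕ, ENNReal.ofReal (q * z * ((1-q)*z)^k)
      = ENNReal.ofReal (q*z) * (ENNReal.ofReal ((1-q)*z))^k := by
    intro k
    rw [ENNReal.ofReal_mul (by positivity), ENNReal.ofReal_pow hp0]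
  simp_rw [h1]
  rw [ENNReal.tsum_mul_left, ENNReal.tsum_geometric]
  rw [← ENNReal.ofReal_one, ← ENNReal.ofReal_sub _ hp0,
    ← ENNReal.ofReal_inv_of_pos (by linarith), ← ENNReal.ofReal_mul (by positivity)]
  rw [div_eq_mul_inv]

lemma aux_V_total {Ω : Type*} [MeasureSpace Ω] [IsProbabilityMeasure (ℙ : Measure Ω)]
    (W : Ω → ℕ) (hW : Measurable W) :
    ∑' k : ℕ, ℙ {ω | W ω = k} = 1 := by
  have h : ∀ k : ℕ, {ω | W ω = k} = W ⁻¹' {k} := fun k => rfl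
  simp_rw [h]
  rw [← measure_iUnion (fun i j hij => Set.disjoint_left.mpr (by
      intro ω h1 h2; simp only [Set.mem_preimage, Set.mem_singleton_iff] at h1 h2
      exact hij (h1 ▸ h2 ▸ rfl)))
    (fun k => hW (measurableSet_singleton k))]
  have h2 : (⋃ k : ℕ, W ⁻¹' {k}) = Set.univ := by ext ω; simp
  rw [h2, measure_univ]

lemma aux_V0 {Ω : Type*} [MeasureSpace Ω] [IsProbabilityMeasure (ℙ : Measure Ω)]
    {q : ℝ} (hq0 : 0 < q) (hq1 : q ≤ 1)
    (W : Ω → ℕ) (hW : Measurable W)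
    (hV : ∀ m : ℕ, 1 ≤ m → ℙ {ω | W ω = m} = ENNReal.ofReal (q * (1 - q) ^ (m - 1))) :
    ℙ {ω | W ω = 0} = 0 := by
  have htot := aux_V_total W hW
  rw [tsum_eq_zero_add' ENNReal.summable] at htot
  have htail : ∑' k : ℕ, ℙ {ω | W ω = k + 1} = 1 := by
    have h1 : ∀ k : ℕ, ℙ {ω | W ω = k + 1} = ENNReal.ofReal (q * 1 * ((1-q)*1)^k) := by
      intro k
      rw [hV (k+1) (Nat.le_add_left 1 k)]
      simp [mul_one]
    simp_rw [h1]
    rw [aux_geom_tsum hq0 hq1 zero_le_one (by linarith)]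
    simp only [mul_one]
    have h2 : (1:ℝ) - (1-q) = q := by ring
    rw [h2, div_self hq0.ne']
    exact ENNReal.ofReal_one
  rw [htail] at htot
  nth_rewrite 2 [← zero_add (1 : ENNReal)] at htot
  exact (ENNReal.add_left_inj ENNReal.one_ne_top).mp htot

lemma aux_factor {Ω : Type*} [MeasureSpace Ω] [IsProbabilityMeasure (ℙ : Measure Ω)]
    {q z : ℝ} (hq0 : 0 < q) (hq1 : q ≤ 1) (hz0 : 0 ≤ z) (hpz : (1-q)*z < 1)
    (W : Ω → ℕ) (hW : Measurable W)
    (hV : ∀ m : ℕ, 1 ≤ m → ℙ {ω | W ω = m} = ENNReal.ofReal (q * (1 - q) ^ (m - 1))) :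
    ∫⁻ ω, (ENNReal.ofReal z) ^ (W ω) ∂ℙ = ENNReal.ofReal (q*z/(1-(1-q)*z)) := by
  have hmf : Measurable (fun n : ℕ => (ENNReal.ofReal z) ^ n) := measurable_of_countable _
  rw [← lintegral_map hmf hW, lintegral_countable']
  have hsing : ∀ k : ℕ, (Measure.map W ℙ) {k} = ℙ {ω | W ω = k} := by
    intro k
    rw [Measure.map_apply hW (measurableSet_singleton k)]
    rfl
  simp_rw [hsing]
  rw [tsum_eq_zero_add' ENNReal.summable]
  rw [aux_V0 hq0 hq1 W hW hV]
  have hterm : ∀ k : ℕ, (ENNReal.ofReal z) ^ (k+1) * ℙ {ω | W ω = k + 1}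
      = ENNReal.ofReal (q * z * ((1-q)*z)^k) := by
    intro k
    rw [hV (k+1) (Nat.le_add_left 1 k)]
    simp only [Nat.add_sub_cancel]
    rw [← ENNReal.ofReal_pow hz0, ← ENNReal.ofReal_mul (by positivity)]
    congr 1
    rw [mul_pow]; ring
  simp_rw [hterm]
  rw [aux_geom_tsum hq0 hq1 hz0 hpz]
  simp

lemma aux_T_meas {Ω : Type*} [MeasurableSpace Ω]
    (N : Ω → ℕ) (V : ℕ → Ω → ℕ) (hNmeas : Measurable N) (hVmeas : ∀ i, Measurable (V i)) :
    Measurable (fun ω => ∑ i ∈ Finset.range (N ω), V i ω) := by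
  apply measurable_to_countable'
  intro k
  have h : (fun ω => ∑ i ∈ Finset.range (N ω), V i ω) ⁻¹' {k}
      = ⋃ m, ({ω | N ω = m} ∩ {ω | ∑ i ∈ Finset.range m, V i ω = k}) := by
    ext ω
    simp only [Set.mem_preimage, Set.mem_singleton_iff, Set.mem_iUnion, Set.mem_inter_iff,
      Set.mem_setOf_eq]
    constructor
    · intro h; exact ⟨N ω, rfl, h⟩
    · rintro ⟨m, hm, hs⟩; rw [hm]; exact hs
  rw [h]
  refine MeasurableSet.iUnion fun m => (hNmeas (measurableSet_singleton m)).inter ?_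
  exact (Finset.measurable_sum (Finset.range m) fun i _ => hVmeas i) (measurableSet_singleton k)

lemma aux_mgf {Ω : Type*} [MeasureSpace Ω] [IsProbabilityMeasure (ℙ : Measure Ω)]
    {μpar q : ℝ} (hμ : 0 < μpar) (hq0 : 0 < q) (hq1 : q ≤ 1)
    (N : Ω → ℕ) (V : ℕ → Ω → ℕ)
    (hNmeas : Measurable N) (hVmeas : ∀ i, Measurable (V i))
    (hIndep : iIndepFun
      (fun o : Option ℕ => o.elim N V) ℙ)
    (hN : ∀ m : ℕ, ℙ {ω | N ω = m}
      = ENNReal.ofReal (Real.exp (-μpar) * μpar ^ m / (Nat.factorial m : ℝ)))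
    (hV : ∀ i, ∀ m : ℕ, 1 ≤ m →
      ℙ {ω | V i ω = m} = ENNReal.ofReal (q * (1 - q) ^ (m - 1)))
    {z : ℝ} (hz0 : 0 ≤ z) (hpz : (1-q)*z < 1) :
    ∫⁻ ω, (ENNReal.ofReal z) ^ (∑ i ∈ Finset.range (N ω), V i ω) ∂ℙ
      = ENNReal.ofReal (Real.exp (μpar * (q*z/(1-(1-q)*z)) - μpar)) := by
  classical
  set ξ := ENNReal.ofReal z with hξ
  set M := q*z/(1-(1-q)*z) with hMdef
  have h1mz : 0 < 1-(1-q)*z := by linarith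
  have hM0 : 0 ≤ M := by rw [hMdef]; positivity
  have hNsetm : ∀ m, MeasurableSet {ω | N ω = m} := fun m => hNmeas (measurableSet_singleton m)
  have hdisj : Pairwise (Function.onFun Disjoint fun m => {ω | N ω = m}) := by
    intro a b hab
    rw [Function.onFun, Set.disjoint_left]
    intro ω h1 h2
    simp only [Set.mem_setOf_eq] at h1 h2
    exact hab (h1 ▸ h2 ▸ rfl)
  have huniv : (Set.univ : Set Ω) = ⋃ m, {ω | N ω = m} := by ext ω; simp
  rw [← setLIntegral_univ, huniv, lintegral_iUnion hNsetm hdisj]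
  have hpiece : ∀ m, ∫⁻ ω in {ω | N ω = m}, ξ ^ (∑ i ∈ Finset.range (N ω), V i ω) ∂ℙ
      = ℙ {ω | N ω = m} * (ENNReal.ofReal M)^m := by
    intro m
    have h1 : ∫⁻ ω in {ω | N ω = m}, ξ ^ (∑ i ∈ Finset.range (N ω), V i ω) ∂ℙ
        = ∫⁻ ω in {ω | N ω = m}, ∏ i ∈ Finset.range m, ξ ^ (V i ω) ∂ℙ := by
      refine setLIntegral_congr_fun (hNsetm m) (fun ω hω => ?_)
      have hNω : N ω = m := hω
      rw [hNω]
      exact (Finset.prod_pow_eq_pow_sum _ _ _).symm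
    rw [h1]
    -- independence step
    set g : Option ℕ → ℕ → ENNReal :=
      fun o => o.elim (fun n => if n = m then 1 else 0) (fun _ n => ξ ^ n) with hg
    set G : Option ℕ → Ω → ENNReal := fun o => g o ∘ (o.elim N V) with hG
    have hGmeas : ∀ o, Measurable (G o) := by
      rintro (_ | i)
      · exact (measurable_of_countable _).comp hNmeas
      · exact (measurable_of_countable _).comp (hVmeas i)
    have hGindep : iIndepFun G ℙ :=
      hIndep.comp g (fun o => measurable_of_countable _)
    have hnone : (none : Option ℕ) ∉ (Finset.range m).image some := by simp
    have hptwise : ∀ ω, Set.indicator {ω | N ω = m}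
          (fun ω => ∏ i ∈ Finset.range m, ξ ^ (V i ω)) ω
        = ∏ o ∈ insert none ((Finset.range m).image some), G o ω := by
      intro ω
      rw [Finset.prod_insert hnone,
        Finset.prod_image (fun a _ b _ h => Option.some_injective ℕ h)]
      by_cases hω : N ω = m
      · simp only [Set.indicator_of_mem (by exact hω : ω ∈ {ω | N ω = m})]
        have hone : G none ω = 1 := by simp [hG, hg, hω]
        rw [hone, one_mul]
        rfl
      · simp only [Set.indicator_of_notMem (by exact hω : ω ∉ {ω | N ω = m})]
        have hzero : G none ω = 0 := by simp [hG, hg, hω]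
        rw [hzero, zero_mul]
    rw [← lintegral_indicator (hNsetm m), lintegral_congr hptwise,
      aux_lintegral_prod_indep hGmeas hGindep,
      Finset.prod_insert hnone,
      Finset.prod_image (fun a _ b _ h => Option.some_injective ℕ h)]
    have hfac : ∀ i, ∫⁻ ω, G (some i) ω ∂ℙ = ENNReal.ofReal M :=
      fun i => aux_factor hq0 hq1 hz0 hpz (V i) (hVmeas i) (hV i)
    congr 1
    · have hind : G none = Set.indicator {ω | N ω = m} 1 := by
        ext ω
        by_cases hω : N ω = m
        · simp [hG, hg, hω, Set.indicator_of_mem (by exact hω : ω ∈ {ω | N ω = m})]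
        · simp [hG, hg, hω, Set.indicator_of_notMem (by exact hω : ω ∉ {ω | N ω = m})]
      rw [hind, lintegral_indicator_one (hNsetm m)]
    · rw [Finset.prod_congr rfl (fun i _ => hfac i), Finset.prod_const, Finset.card_range]
  simp_rw [hpiece]
  -- Poisson sum
  have hterm : ∀ m : ℕ, ℙ {ω | N ω = m} * (ENNReal.ofReal M) ^ m
      = ENNReal.ofReal (Real.exp (-μpar) * ((μpar * M) ^ m / (Nat.factorial m : ℝ))) := by
    intro m
    rw [hN m, ← ENNReal.ofReal_pow hM0, ← ENNReal.ofReal_mul (by positivity)]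
    congr 1
    rw [mul_pow]
    field_simp
  simp_rw [hterm]
  rw [← ENNReal.ofReal_tsum_of_nonneg (fun m => by positivity)
      ((Real.summable_pow_div_factorial (μpar * M)).mul_left _)]
  congr 1
  rw [tsum_mul_left]
  have hexp : ∑' m : ℕ, (μpar * M) ^ m / (Nat.factorial m : ℝ) = Real.exp (μpar * M) := by
    rw [Real.exp_eq_exp_ℝ]
    exact (NormedSpace.expSeries_div_hasSum_exp (μpar * M)).tsum_eq
  rw [hexp, ← Real.exp_add]
  ring_nf

/-- Tail bounds for the Poisson–Geometric compound distribution
`S = ∑_{i=1}^N Vᵢ`, where `N ~ Poisson(μ)` and the `Vᵢ` are geometric on the positive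
integers with parameter `q`, all mutually independent. -/
theorem statement3 {Ω : Type*} [MeasureSpace Ω] [IsProbabilityMeasure (ℙ : Measure Ω)]
    (μpar q : ℝ) (hμ : 0 < μpar) (hq : q ∈ Set.Ioc (0 : ℝ) 1)
    (N : Ω → ℕ) (V : ℕ → Ω → ℕ)
    (hNmeas : Measurable N) (hVmeas : ∀ i, Measurable (V i))
    (hIndep : iIndepFun
      (fun o : Option ℕ => o.elim N V) ℙ)
    (hN : ∀ m : ℕ, ℙ {ω | N ω = m}
      = ENNReal.ofReal (Real.exp (-μpar) * μpar ^ m / (Nat.factorial m : ℝ)))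
    (hV : ∀ i, ∀ m : ℕ, 1 ≤ m →
      ℙ {ω | V i ω = m} = ENNReal.ofReal (q * (1 - q) ^ (m - 1)))
    (S : Ω → ℕ) (hS : ∀ ω, S ω = ∑ i ∈ Finset.range (N ω), V i ω)
    (θ : ℝ) (hθ : 0 ≤ θ) :
    (θ ≤ μpar / q →
      ℙ {ω | (S ω : ℝ) ≤ θ}
        ≤ ENNReal.ofReal (Real.exp (-(Real.sqrt μpar - Real.sqrt (θ * q)) ^ 2)))
    ∧ (μpar / q ≤ θ →
      ℙ {ω | θ ≤ (S ω : ℝ)}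
        ≤ ENNReal.ofReal (Real.exp (-(Real.sqrt (θ * q) - Real.sqrt μpar) ^ 2))) := by
  obtain ⟨hq0, hq1⟩ := hq
  have hSmeas : Measurable S := by
    have h : S = fun ω => ∑ i ∈ Finset.range (N ω), V i ω := funext hS
    rw [h]; exact aux_T_meas N V hNmeas hVmeas
  have hfS : ∀ z : ℝ, Measurable (fun ω => (ENNReal.ofReal z) ^ (S ω)) :=
    fun z => (measurable_of_countable _).comp hSmeas
  have hmgf : ∀ z : ℝ, 0 ≤ z → (1-q)*z < 1 →
      ∫⁻ ω, (ENNReal.ofReal z) ^ (S ω) ∂ℙ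
        = ENNReal.ofReal (Real.exp (μpar * (q*z/(1-(1-q)*z)) - μpar)) := by
    intro z h0 h1
    calc ∫⁻ ω, (ENNReal.ofReal z) ^ (S ω) ∂ℙ
        = ∫⁻ ω, (ENNReal.ofReal z) ^ (∑ i ∈ Finset.range (N ω), V i ω) ∂ℙ :=
          lintegral_congr fun ω => by rw [hS ω]
      _ = _ := aux_mgf hμ hq0 hq1 N V hNmeas hVmeas hIndep hN hV h0 h1
  have key : ∀ (z : ℝ) (n : ℕ) (A : Set Ω), 0 < z → (1-q)*z < 1 →
      (∀ ω ∈ A, (ENNReal.ofReal z)^n ≤ (ENNReal.ofReal z)^(S ω)) →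
      ℙ A ≤ ENNReal.ofReal (Real.exp (μpar * (q*z/(1-(1-q)*z)) - μpar) / z^n) := by
    intro z n A hz0 hpz hAle
    have h1 : (ENNReal.ofReal z)^n * ℙ A ≤ ∫⁻ ω, (ENNReal.ofReal z) ^ (S ω) ∂ℙ :=
      calc (ENNReal.ofReal z)^n * ℙ A
          = ∫⁻ _ in A, (ENNReal.ofReal z)^n ∂ℙ := (setLIntegral_const A _).symm
        _ ≤ ∫⁻ ω in A, (ENNReal.ofReal z)^(S ω) ∂ℙ := setLIntegral_mono (hfS z) hAle
        _ ≤ ∫⁻ ω, (ENNReal.ofReal z)^(S ω) ∂ℙ := setLIntegral_le_lintegral A _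
    rw [hmgf z hz0.le hpz] at h1
    have hξn0 : (ENNReal.ofReal z)^n ≠ 0 := pow_ne_zero n (ENNReal.ofReal_pos.mpr hz0).ne'
    have hξntop : (ENNReal.ofReal z)^n ≠ ⊤ := ENNReal.pow_ne_top ENNReal.ofReal_ne_top
    have h2 : ℙ A ≤ ENNReal.ofReal (Real.exp (μpar * (q*z/(1-(1-q)*z)) - μpar))
        / (ENNReal.ofReal z)^n := by
      rw [ENNReal.le_div_iff_mul_le (Or.inl hξn0) (Or.inl hξntop), mul_comm]
      exact h1
    rwa [← ENNReal.ofReal_pow hz0.le, ← ENNReal.ofReal_div_of_pos (pow_pos hz0 n)] at h2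
  constructor
  · -- lower tail
    intro hθle
    rcases eq_or_lt_of_le hθ with hθ0 | hθpos
    · -- θ = 0
      have hset : {ω | (S ω : ℝ) ≤ θ} ⊆ {ω | N ω = 0} ∪ ⋃ i, {ω | V i ω = 0} := by
        intro ω hω
        simp only [Set.mem_setOf_eq] at hω
        have hS0 : S ω = 0 := by
          have h1 : (S ω : ℝ) ≤ 0 := by rw [hθ0]; exact hω
          exact_mod_cast le_antisymm (by exact_mod_cast h1) (Nat.zero_le _)
        rw [hS ω] at hS0
        by_cases hN0 : N ω = 0
        · exact Or.inl hN0
        · refine Or.inr (Set.mem_iUnion.mpr ⟨0, ?_⟩)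
          exact Finset.sum_eq_zero_iff.mp hS0 0
            (Finset.mem_range.mpr (Nat.pos_of_ne_zero hN0))
      calc ℙ {ω | (S ω : ℝ) ≤ θ} ≤ ℙ ({ω | N ω = 0} ∪ ⋃ i, {ω | V i ω = 0}) :=
            measure_mono hset
        _ ≤ ℙ {ω | N ω = 0} + ℙ (⋃ i, {ω | V i ω = 0}) := measure_union_le _ _
        _ ≤ ℙ {ω | N ω = 0} + ∑' i, ℙ {ω | V i ω = 0} :=
            add_le_add_right (measure_iUnion_le _) _
        _ = ℙ {ω | N ω = 0} := by
            have : ∀ i, ℙ {ω | V i ω = 0} = 0 :=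
              fun i => aux_V0 hq0 hq1 (V i) (hVmeas i) (hV i)
            simp [this]
        _ ≤ ENNReal.ofReal (Real.exp (-(Real.sqrt μpar - Real.sqrt (θ * q)) ^ 2)) := by
            rw [hN 0]
            apply ENNReal.ofReal_le_ofReal
            rw [← hθ0]
            simp [Real.sq_sqrt hμ.le]
    · obtain ⟨z, hz0, hpz, ⟨hzle1, _⟩, hineq⟩ := aux_core hμ hq0 hq1 hθpos
      have hθqμ : θ * q ≤ μpar := (le_div_iff₀ hq0).mp hθle
      have hz1 : z ≤ 1 := hzle1 hθqμ
      set n := ⌊θ⌋₊ with hn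
      have hAle : ∀ ω ∈ {ω | (S ω : ℝ) ≤ θ},
          (ENNReal.ofReal z)^n ≤ (ENNReal.ofReal z)^(S ω) := by
        intro ω hω
        have hSn : S ω ≤ n := Nat.le_floor hω
        exact pow_le_pow_of_le_one (by positivity) (ENNReal.ofReal_le_one.mpr hz1) hSn
      refine (key z n _ hz0 hpz hAle).trans (ENNReal.ofReal_le_ofReal ?_)
      rw [div_le_iff₀ (pow_pos hz0 n)]
      have hzn : z^n = Real.exp (n * Real.log z) := by
        rw [Real.exp_nat_mul, Real.exp_log hz0]
      rw [hzn, ← Real.exp_add]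
      apply Real.exp_le_exp.mpr
      have hlogz : Real.log z ≤ 0 := Real.log_nonpos hz0.le hz1
      have hnθ : (n:ℝ) ≤ θ := Nat.floor_le hθ
      have hmono : θ * Real.log z ≤ n * Real.log z := by nlinarith
      have hsq : (Real.sqrt μpar - Real.sqrt (θ*q))^2
          = (Real.sqrt (θ*q) - Real.sqrt μpar)^2 := by ring
      rw [hsq]
      linarith [hineq]
  · -- upper tail
    intro hθge
    have hθpos : 0 < θ := lt_of_lt_of_le (by positivity) hθge
    obtain ⟨z, hz0, hpz, ⟨_, h1lez⟩, hineq⟩ := aux_core hμ hq0 hq1 hθpos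
    have hθqμ : μpar ≤ θ * q := by
      rw [div_le_iff₀ hq0] at hθge; linarith
    have hz1 : 1 ≤ z := h1lez hθqμ
    set n := ⌈θ⌉₊ with hn
    have hAle : ∀ ω ∈ {ω | θ ≤ (S ω : ℝ)},
        (ENNReal.ofReal z)^n ≤ (ENNReal.ofReal z)^(S ω) := by
      intro ω hω
      have hSn : n ≤ S ω := Nat.ceil_le.mpr hω
      exact pow_le_pow_right₀ (ENNReal.one_le_ofReal.mpr hz1) hSn
    refine (key z n _ hz0 hpz hAle).trans (ENNReal.ofReal_le_ofReal ?_)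
    rw [div_le_iff₀ (pow_pos hz0 n)]
    have hzn : z^n = Real.exp (n * Real.log z) := by
      rw [Real.exp_nat_mul, Real.exp_log hz0]
    rw [hzn, ← Real.exp_add]
    apply Real.exp_le_exp.mpr
    have hlogz : 0 ≤ Real.log z := Real.log_nonneg hz1
    have hnθ : θ ≤ (n:ℝ) := Nat.le_ceil θ
    have hmono : θ * Real.log z ≤ n * Real.log z := by nlinarith
    linarith [hineq]
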